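/- For all z, w ∈ ℂ one has the polynomial identity (w − z²)² − (w + 3z²)(z − 1)(z − w) = −z·(2z³ − 3z²w − 3z² + 6wz − w² − w). Moreover the cubic H(z,w) = 2z³ − 3z²w − 3z² + 6wz − w² − w vanishes along the rational parametrization t ↦ (t/((t−1)(4−t)), t²(3−t)/((t−1)(4−t)²)): for every t ∈ ℂ with (t−1)(4−t) ≠ 0, H(t/((t−1)(4−t)), t²(3−t)/((t−1)(4−t)²)) = 0. (Thus the critical level curve {R_{b1} = 1} of R_{b1}(z,w) = (w−z²)²/((w+3z²)(z−1)(z−w)) is the union of the line {z = 0} and the rational cubic {H = 0}.) -/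
import Mathlib

/-- The critical level curve `{R_{b1} = 1}` is the union of the line `{z = 0}` and the
rational cubic `{H = 0}`, where `H(z,w) = 2z³ − 3z²w − 3z² + 6wz − w² − w`. -/
theorem stmt_8 (H : ℂ → ℂ → ℂ)
    (hH : ∀ z w : ℂ, H z w = 2*z^3 - 3*z^2*w - 3*z^2 + 6*w*z - w^2 - w) :
    (∀ z w : ℂ, (w - z^2)^2 - (w + 3*z^2)*(z - 1)*(z - w) = -z * H z w) ∧
    (∀ t : ℂ, (t - 1) * (4 - t) ≠ 0 →
      H (t / ((t - 1) * (4 - t))) (t^2 * (3 - t) / ((t - 1) * (4 - t)^2)) = 0) := by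
  constructor
  · intro z w; rw [hH]; ring
  · intro t ht
    have h1 : (t - 1) ≠ 0 := fun h => ht (by rw [h]; ring)
    have h2 : (4 - t) ≠ 0 := fun h => ht (by rw [h]; ring)
    have hd : (t - 1) * (4 - t) ≠ 0 := ht
    have he : (t - 1) * (4 - t)^2 ≠ 0 := mul_ne_zero h1 (pow_ne_zero _ h2)
    obtain ⟨z, hz⟩ : ∃ z, t / ((t - 1) * (4 - t)) = z := ⟨_, rfl⟩
    obtain ⟨w, hw⟩ : ∃ w, t^2 * (3 - t) / ((t - 1) * (4 - t)^2) = w := ⟨_, rfl⟩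
    rw [hz, hw, hH]
    have hz' : z * ((t - 1) * (4 - t)) = t := by
      rw [← hz]; exact div_mul_cancel₀ _ hd
    have hw' : w * ((t - 1) * (4 - t)^2) = t^2 * (3 - t) := by
      rw [← hw]; exact div_mul_cancel₀ _ he
    have hde : ((t - 1) * (4 - t))^3 * ((t - 1) * (4 - t)^2)^2 ≠ 0 :=
      mul_ne_zero (pow_ne_zero _ hd) (pow_ne_zero _ he)
    have key : (2*z^3 - 3*z^2*w - 3*z^2 + 6*w*z - w^2 - w) *
        (((t - 1) * (4 - t))^3 * ((t - 1) * (4 - t)^2)^2) = 0 := by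
      linear_combination
        (2*((t - 1) * (4 - t)^2)^2*((z*((t - 1) * (4 - t)))^2 + z*((t - 1) * (4 - t))*t + t^2)
          - 3*((t - 1) * (4 - t))*((t - 1) * (4 - t)^2)*(w*((t - 1) * (4 - t)^2))*(z*((t - 1) * (4 - t)) + t)
          - 3*((t - 1) * (4 - t))*((t - 1) * (4 - t)^2)^2*(z*((t - 1) * (4 - t)) + t)
          + 6*((t - 1) * (4 - t))^2*((t - 1) * (4 - t)^2)*(w*((t - 1) * (4 - t)^2))) * hz'
        + (-3*((t - 1) * (4 - t))*((t - 1) * (4 - t)^2)*t^2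
          + 6*((t - 1) * (4 - t))^2*((t - 1) * (4 - t)^2)*t
          - ((t - 1) * (4 - t))^3*(w*((t - 1) * (4 - t)^2) + t^2*(3 - t))
          - ((t - 1) * (4 - t))^3*((t - 1) * (4 - t)^2)) * hw'
    exact (mul_eq_zero.mp key).resolve_right hde
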